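/- Lagrange-inversion step for general slope: let U(x) be the formal power series with U(0)=0 satisfying U(x) = x·(1 + U(x)^{a+c})^{1/a} (a,c positive integers, gcd(a,c)=1), and let h = ℓa + c for an integer ℓ ≥ 0. Then for positive integers s, [x^{a((a+c)s+ℓ−1)}] U(x)^h = (ℓa+c)/(a((a+c)s+ℓ−1)) · C((a+c)s+ℓ−1, as−1). -/

import Mathlib

open PowerSeries Finset

lemma aux_eq {R : Type*} [CommRing R] (x b cc db : R) (k : ℕ) (h2 : b * cc = 1) :
    (x * b) * (x ^ k + x ^ (k+1) * (db * cc)) = x ^ (k+1) * (b + x * db) := by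
  linear_combination (x ^ (k+2) * db) * h2

lemma aux_lt {R : Type*} [CommRing R] (x b cc db dc : R) (p r : ℕ)
    (h2 : b * cc = 1) (h3 : b * dc + cc * db = 0) :
    (x ^ (p+2) * b ^ (p+2)) * (x ^ r * cc ^ (p+1) - x ^ (r+1) * (cc ^ p * dc))
      = x ^ (r + 1 + (p+1)) * (b + x * db) := by
  have hq1 : b ^ (p+1) * cc ^ (p+1) = 1 := by rw [← mul_pow, h2, one_pow]
  have h4 : b ^ 2 * dc = - db := by linear_combination b * h3 - db * h2
  have hq2 : b ^ (p+2) * (cc ^ p * dc) = - db := by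
    calc b ^ (p+2) * (cc ^ p * dc) = (b * cc) ^ p * (b ^ 2 * dc) := by ring
    _ = - db := by rw [h2, one_pow, h4, one_mul]
  linear_combination (x ^ (p+r+2) * b) * hq1 - (x ^ (p+r+3)) * hq2

/-- Lagrange-inversion step for general slope.  Let `U ∈ ℚ⟦x⟧` with
`U(0)=0` satisfy `U = x·(1+U^{a+c})^{1/a}` (equivalently: `U^a = x^a·(1+U^{a+c})`
with `[x¹]U = 1`), where `a,c` are coprime positive integers.  With `h = ℓa + c`,
for every positive integer `s`,
`[x^{a((a+c)s+ℓ−1)}] U^h = (ℓa+c)/(a((a+c)s+ℓ−1)) · C((a+c)s+ℓ−1, as−1)`. -/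
theorem lagrange_inversion_general_slope (a c : ℕ) (ha : 0 < a) (hc : 0 < c)
    (hcop : Nat.Coprime a c) (U : PowerSeries ℚ)
    (hU0 : PowerSeries.constantCoeff U = 0)
    (hU1 : PowerSeries.coeff 1 U = 1)
    (hker : U ^ a = PowerSeries.X ^ a * (1 + U ^ (a + c)))
    (ℓ : ℕ) (s : ℕ) (hs : 0 < s) :
    PowerSeries.coeff (a * ((a + c) * s + ℓ - 1)) (U ^ (ℓ * a + c)) =
      ((ℓ * a + c : ℚ)) / (a * ((a + c) * s + ℓ - 1)) *
        (((a + c) * s + ℓ - 1).choose (a * s - 1) : ℚ) := by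
  classical
  obtain ⟨m, hm⟩ : ∃ m, a * s = m + 1 := ⟨a * s - 1, by have := Nat.mul_pos ha hs; omega⟩
  obtain ⟨M, hM⟩ : ∃ M, (a + c) * s + ℓ = M + 1 := by
    have : 0 < (a + c) * s := Nat.mul_pos (by omega) hs
    exact ⟨(a + c) * s + ℓ - 1, by omega⟩
  obtain ⟨h', hh⟩ : ∃ h', ℓ * a + c = h' + 1 := ⟨ℓ * a + c - 1, by omega⟩
  rw [hM, hm, hh, Nat.add_sub_cancel, Nat.add_sub_cancel]
  have hmM : m ≤ M := by
    have t1 : a * s ≤ (a + c) * s := Nat.mul_le_mul_right s (Nat.le_add_right a c)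
    omega
  have hN : a * M = (a + c) * m + h' + 1 := by
    have e0 : a * M + a = ((a + c) * m + h' + 1) + a := by
      calc a * M + a = a * (M + 1) := by ring
        _ = a * ((a + c) * s + ℓ) := by rw [hM]
        _ = (a + c) * (a * s) + a * ℓ := by ring
        _ = (a + c) * (m + 1) + a * ℓ := by rw [hm]
        _ = (a + c) * m + (ℓ * a + c) + a := by ring
        _ = ((a + c) * m + h' + 1) + a := by omega
    exact Nat.add_right_cancel e0
  have hM1 : 1 ≤ M := by
    have t2 : a + c ≤ (a + c) * s := Nat.le_mul_of_pos_right (a + c) hs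
    omega
  -- power series setup
  set B : ℚ⟦X⟧ := PowerSeries.mk fun n => coeff (n + 1) U with hB
  have hXB : X * B = U := by
    ext n
    cases n with
    | zero => simp [coeff_zero_eq_constantCoeff, map_mul, hU0]
    | succ n => rw [coeff_succ_X_mul, hB, coeff_mk]
  have hB0 : constantCoeff B ≠ 0 := by
    rw [hB, PowerSeries.constantCoeff_mk]
    simpa using hU1 ▸ (one_ne_zero : (1:ℚ) ≠ 0)
  set Cq : ℚ⟦X⟧ := B⁻¹ with hCqdef
  have hBC : B * Cq = 1 := PowerSeries.mul_inv_cancel B hB0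
  have hUne : U ≠ 0 := by
    intro h0
    rw [h0] at hU1
    simp at hU1
  have hDU : (derivative ℚ) U = B + X * (derivative ℚ) B := by
    rw [← hXB, Derivation.leibniz, derivative_X]
    simp [smul_eq_mul]
    ring
  have hD0 : B * (derivative ℚ) Cq + Cq * (derivative ℚ) B = 0 := by
    have h1 : (derivative ℚ) (B * Cq) = 0 := by
      rw [hBC]; exact Derivation.map_one_eq_zero _
    rw [Derivation.leibniz] at h1
    simpa [smul_eq_mul] using h1
  set T : ℕ → ℚ⟦X⟧ := fun i =>
    if i < m then
      X ^ ((a+c)*i + h') * Cq ^ ((a+c)*(m-i))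
        - PowerSeries.C ((((a+c)*(m-i) : ℕ)) : ℚ)⁻¹ *
            (X ^ ((a+c)*i + h' + 1) * (derivative ℚ) (Cq ^ ((a+c)*(m-i))))
    else if i = m then
      X ^ ((a+c)*m + h') + X ^ ((a+c)*m + h' + 1) * ((derivative ℚ) B * Cq)
    else
      X ^ ((a+c)*m + h' + 1) * (U ^ ((a+c)*i - ((a+c)*m + 1)) * (derivative ℚ) U)
    with hT
  have hA : ∀ i, U ^ ((a+c)*m + 1) * T i
      = X ^ ((a+c)*m + h' + 1) * (U ^ ((a+c)*i) * (derivative ℚ) U) := by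
    intro i
    rcases lt_trichotomy i m with him | him | him
    · -- i < m
      obtain ⟨p, hp⟩ : ∃ p, (a+c)*(m-i) = p + 1 :=
        ⟨(a+c)*(m-i) - 1, by
          have := Nat.mul_pos (show 0 < a + c by omega) (show 0 < m - i by omega); omega⟩
      have hsplit : (a+c)*m = (a+c)*i + (p+1) := by
        rw [← hp, ← Nat.mul_add]
        congr 1
        omega
      have hU2 : U ^ (p+2) = X ^ (p+2) * B ^ (p+2) := by rw [← hXB, mul_pow]
      have hscal : (PowerSeries.C (((p+1 : ℕ)) : ℚ)⁻¹) * (((p+1 : ℕ)) : ℚ⟦X⟧) = 1 := by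
        rw [← map_natCast (PowerSeries.C (R := ℚ)) (p+1), ← map_mul]
        rw [inv_mul_cancel₀ (by exact_mod_cast (Nat.succ_ne_zero p))]
        exact map_one _
      have hDC : (derivative ℚ) (Cq ^ (p+1))
          = (((p+1:ℕ)) : ℚ⟦X⟧) * (Cq ^ p * (derivative ℚ) Cq) := by
        rw [Derivation.leibniz_pow, Nat.add_sub_cancel]
        simp [smul_eq_mul]
      have step : U ^ ((a+c)*m + 1) * T i
          = U ^ ((a+c)*i) * ((X ^ (p+2) * B ^ (p+2)) *
              (X ^ ((a+c)*i + h') * Cq ^ (p+1)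
                - X ^ ((a+c)*i + h' + 1) * (Cq ^ p * (derivative ℚ) Cq))) := by
        rw [hT]
        simp only [if_pos him]
        rw [hp, hDC]
        rw [show (a+c)*m + 1 = (a+c)*i + (p+2) from by omega, pow_add, hU2]
        linear_combination (- (U ^ ((a+c)*i) * (X ^ (p+2) * B ^ (p+2)) *
          X ^ ((a+c)*i + h' + 1) * (Cq ^ p * (derivative ℚ) Cq))) * hscal
      rw [step, aux_lt X B Cq ((derivative ℚ) B) ((derivative ℚ) Cq) p ((a+c)*i + h') hBC hD0]
      rw [show (a+c)*i + h' + 1 + (p+1) = (a+c)*m + h' + 1 from by omega, hDU]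
      ring
    · -- i = m
      rw [him]
      have hTm : T m = X ^ ((a+c)*m + h') + X ^ ((a+c)*m + h' + 1) * ((derivative ℚ) B * Cq) := by
        simp [hT]
      rw [hTm]
      calc U ^ ((a+c)*m + 1) *
            (X ^ ((a+c)*m + h') + X ^ ((a+c)*m + h' + 1) * ((derivative ℚ) B * Cq))
          = U ^ ((a+c)*m) * ((X * B) *
              (X ^ ((a+c)*m + h') + X ^ ((a+c)*m + h' + 1) * ((derivative ℚ) B * Cq))) := by
            rw [pow_succ, hXB]; ring
        _ = U ^ ((a+c)*m) * (X ^ ((a+c)*m + h' + 1) * (B + X * (derivative ℚ) B)) := by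
            rw [aux_eq X B Cq ((derivative ℚ) B) ((a+c)*m + h') hBC]
        _ = X ^ ((a+c)*m + h' + 1) * (U ^ ((a+c)*m) * (derivative ℚ) U) := by
            rw [hDU]; ring
    · -- m < i
      rw [hT]
      simp only [if_neg (by omega : ¬ i < m), if_neg (by omega : ¬ i = m)]
      obtain ⟨e, he⟩ : ∃ e, (a+c)*i = (a+c)*m + 1 + e := by
        have h7 : (a+c)*(m+1) ≤ (a+c)*i := Nat.mul_le_mul_left (a+c) (by omega)
        have h8 : (a+c)*(m+1) = (a+c)*m + (a+c) := by ring
        exact ⟨(a+c)*i - ((a+c)*m+1), by omega⟩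
      rw [show (a+c)*i - ((a+c)*m + 1) = e from by omega, he, pow_add]
      ring
  have hCoeff : ∀ i, coeff ((a+c)*m + h') (T i) = if i = m then 1 else 0 := by
    intro i
    rcases lt_trichotomy i m with him | him | him
    · obtain ⟨p, hp⟩ : ∃ p, (a+c)*(m-i) = p + 1 :=
        ⟨(a+c)*(m-i) - 1, by
          have := Nat.mul_pos (show 0 < a + c by omega) (show 0 < m - i by omega); omega⟩
      have hsplit : (a+c)*m = (a+c)*i + (p+1) := by
        rw [← hp, ← Nat.mul_add]
        congr 1
        omega
      rw [hT]
      simp only [if_pos him]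
      rw [hp, map_sub]
      rw [show (a+c)*m + h' = (p+1) + ((a+c)*i + h') from by omega]
      rw [coeff_X_pow_mul]
      rw [coeff_C_mul]
      rw [show (p+1) + ((a+c)*i + h') = p + ((a+c)*i + h' + 1) from by omega]
      rw [coeff_X_pow_mul, coeff_derivative]
      rw [if_neg (by omega : ¬ i = m)]
      have hpne : ((p+1 : ℕ) : ℚ) ≠ 0 := by exact_mod_cast (Nat.succ_ne_zero p)
      push_cast
      push_cast at hpne
      field_simp
      simp
    · rw [him]
      have hTm : T m = X ^ ((a+c)*m + h') + X ^ ((a+c)*m + h' + 1) * ((derivative ℚ) B * Cq) := by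
        simp [hT]
      rw [hTm]
      rw [map_add, coeff_X_pow_mul', if_neg (by omega : ¬ (a+c)*m + h' + 1 ≤ (a+c)*m + h')]
      rw [coeff_X_pow, if_pos rfl, if_pos rfl]
      ring
    · rw [hT]
      simp only [if_neg (by omega : ¬ i < m), if_neg (by omega : ¬ i = m)]
      rw [coeff_X_pow_mul', if_neg (by omega : ¬ (a+c)*m + h' + 1 ≤ (a+c)*m + h')]
  have hBin : (1 + U ^ (a+c)) ^ M
      = ∑ i ∈ range (M+1), (M.choose i : ℚ⟦X⟧) * U ^ ((a+c)*i) := by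
    rw [add_comm (1 : ℚ⟦X⟧), add_pow]
    refine Finset.sum_congr rfl fun i hi => ?_
    rw [one_pow, ← pow_mul]
    ring
  have hMain : U ^ h' * (derivative ℚ) U
      = ∑ i ∈ range (M+1), (M.choose i : ℚ⟦X⟧) * T i := by
    apply mul_left_cancel₀ (pow_ne_zero ((a+c)*m + 1) hUne)
    calc U ^ ((a+c)*m + 1) * (U ^ h' * (derivative ℚ) U)
        = U ^ ((a+c)*m + 1 + h') * (derivative ℚ) U := by rw [pow_add]; ring
      _ = U ^ (a * M) * (derivative ℚ) U := by
          rw [show (a+c)*m + 1 + h' = a * M from by omega]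
      _ = X ^ (a*M) * ((1 + U ^ (a+c)) ^ M * (derivative ℚ) U) := by
          rw [pow_mul U, hker, mul_pow, ← pow_mul]
          ring
      _ = ∑ i ∈ range (M+1), (M.choose i : ℚ⟦X⟧) *
            (X ^ ((a+c)*m + h' + 1) * (U ^ ((a+c)*i) * (derivative ℚ) U)) := by
          rw [hBin, Finset.sum_mul, Finset.mul_sum, hN]
          refine Finset.sum_congr rfl fun i hi => ?_
          ring
      _ = ∑ i ∈ range (M+1), (M.choose i : ℚ⟦X⟧) * (U ^ ((a+c)*m + 1) * T i) := by
          refine Finset.sum_congr rfl fun i hi => ?_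
          rw [hA i]
      _ = U ^ ((a+c)*m + 1) * ∑ i ∈ range (M+1), (M.choose i : ℚ⟦X⟧) * T i := by
          rw [Finset.mul_sum]
          refine Finset.sum_congr rfl fun i hi => ?_
          ring
  have e3 : coeff ((a+c)*m + h') (U ^ h' * (derivative ℚ) U) = (M.choose m : ℚ) := by
    rw [hMain, map_sum]
    have hterm : ∀ i ∈ range (M+1),
        coeff ((a+c)*m + h') ((M.choose i : ℚ⟦X⟧) * T i)
          = if i = m then (M.choose i : ℚ) else 0 := by
      intro i hi
      rw [show ((M.choose i : ℚ⟦X⟧)) = PowerSeries.C ((M.choose i : ℕ) : ℚ) from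
        (map_natCast (PowerSeries.C (R := ℚ)) _).symm]
      rw [coeff_C_mul, hCoeff i]
      split_ifs with h9
      · rw [mul_one]
      · rw [mul_zero]
    rw [Finset.sum_congr rfl hterm,
      Finset.sum_ite_eq' (range (M+1)) m fun i => (M.choose i : ℚ)]
    rw [if_pos (by simpa using Nat.lt_succ_of_le hmM)]
  have e2 : coeff ((a+c)*m + h') ((derivative ℚ) (U ^ (h'+1)))
      = ((h'+1 : ℕ) : ℚ) * coeff ((a+c)*m + h') (U ^ h' * (derivative ℚ) U) := by
    rw [Derivation.leibniz_pow, Nat.add_sub_cancel, smul_eq_mul, map_nsmul, nsmul_eq_mul]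
  have e1 := coeff_derivative (U ^ (h'+1)) ((a+c)*m + h')
  rw [e2, e3] at e1
  rw [show (a+c)*m + h' + 1 = a * M from hN.symm] at e1
  have hNQ : (((a+c)*m + h' : ℕ) : ℚ) + 1 = (a:ℚ) * M := by
    exact_mod_cast (congrArg (Nat.cast (R:=ℚ)) hN).symm
  rw [hNQ] at e1
  -- final cast chase
  have hMQ : ((a:ℚ)+c)*s + ℓ - 1 = (M:ℚ) := by
    have h10 := congrArg (Nat.cast (R:=ℚ)) hM
    push_cast at h10
    linarith
  rw [hMQ]
  have hhQ : (ℓ:ℚ)*a + c = ((h' : ℚ)+1) := by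
    exact_mod_cast congrArg (Nat.cast (R:=ℚ)) hh
  rw [hhQ]
  have hane : (a:ℚ) * M ≠ 0 := by
    have h11 : (0:ℚ) < a := by exact_mod_cast ha
    have h12 : (0:ℚ) < M := by exact_mod_cast hM1
    positivity
  rw [div_mul_eq_mul_div, eq_div_iff hane]
  push_cast at e1
  linarith [e1]
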